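/- First derivative of the overlap: for α ∈ (0,1), assuming the integral below is finite, the function α ↦ U(α) is differentiable at α with derivative U′(α) = ∫_Ω p₀(w)p₁(w)(p₁(w) − p₀(w))/(α p₀(w) + β p₁(w))² dw, where β = 1−α. -/

import Mathlib

open MeasureTheory Real Set

/-- The overlap integral `U(α) = ∫_Ω p₀ p₁ / (α p₀ + (1-α) p₁)`. -/
noncomputable def overlap (Ω : Set ℝ) (p₀ p₁ : ℝ → ℝ) (α : ℝ) : ℝ :=
  ∫ w in Ω, p₀ w * p₁ w / (α * p₀ w + (1 - α) * p₁ w)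

/-- First derivative of the overlap: for `α ∈ (0,1)`, assuming the relevant integrals
are finite, `α ↦ U(α)` is differentiable at `α` with derivative
`U'(α) = ∫_Ω p₀ p₁ (p₁ - p₀) / (α p₀ + (1-α) p₁)² dw`. -/
theorem overlap_hasDerivAt
    (p₀ p₁ : ℝ → ℝ) (Ω : Set ℝ)
    (hm0 : Measurable p₀) (hm1 : Measurable p₁)
    (hpos0 : ∀ w, 0 ≤ p₀ w) (hpos1 : ∀ w, 0 ≤ p₁ w)
    (hnorm0 : ∫ w, p₀ w = 1) (hnorm1 : ∫ w, p₁ w = 1)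
    (hΩ0 : Ω = {w | 0 < p₀ w}) (hΩ1 : Ω = {w | 0 < p₁ w})
    (α : ℝ) (hα : α ∈ Ioo (0:ℝ) 1)
    (hUint : ∀ a ∈ Icc (0:ℝ) 1,
      IntegrableOn (fun w => p₀ w * p₁ w / (a * p₀ w + (1 - a) * p₁ w)) Ω)
    (hDint : IntegrableOn
      (fun w => p₀ w * p₁ w * (p₁ w - p₀ w) / (α * p₀ w + (1 - α) * p₁ w) ^ 2) Ω) :
    HasDerivAt (overlap Ω p₀ p₁)
      (∫ w in Ω, p₀ w * p₁ w * (p₁ w - p₀ w) / (α * p₀ w + (1 - α) * p₁ w) ^ 2)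
      α := by
  obtain ⟨hα0, hα1⟩ := hα
  have h1α : (0:ℝ) < 1 - α := by linarith
  set ε : ℝ := min α (1 - α) / 2 with hε
  have hε0 : 0 < ε := by positivity
  have hεα : ε ≤ α / 2 := by
    have := min_le_left α (1 - α); simp only [hε]; linarith
  have hε1α : ε ≤ (1 - α) / 2 := by
    have := min_le_right α (1 - α); simp only [hε]; linarith
  have hΩmeas : MeasurableSet Ω := by
    rw [hΩ0]; exact measurableSet_lt measurable_const hm0
  -- the parametrized function and its derivative
  set F : ℝ → ℝ → ℝ := fun a w => p₀ w * p₁ w / (a * p₀ w + (1 - a) * p₁ w) with hF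
  set F' : ℝ → ℝ → ℝ :=
    fun a w => p₀ w * p₁ w * (p₁ w - p₀ w) / (a * p₀ w + (1 - a) * p₁ w) ^ 2 with hF'
  set bound : ℝ → ℝ :=
    fun w => 4 * ‖p₀ w * p₁ w * (p₁ w - p₀ w) / (α * p₀ w + (1 - α) * p₁ w) ^ 2‖ with hb
  -- facts for x in the ball
  have hball : ∀ x ∈ Metric.ball α ε, α / 2 ≤ x ∧ (1 - α) / 2 ≤ 1 - x := by
    intro x hx
    rw [Metric.mem_ball, Real.dist_eq, abs_lt] at hx
    constructor <;> linarith
  have hden : ∀ w ∈ Ω, ∀ x ∈ Metric.ball α ε,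
      (α * p₀ w + (1 - α) * p₁ w) / 2 ≤ x * p₀ w + (1 - x) * p₁ w := by
    intro w hw x hx
    obtain ⟨h1, h2⟩ := hball x hx
    have := hpos0 w; have := hpos1 w
    nlinarith
  have hDpos : ∀ w ∈ Ω, 0 < α * p₀ w + (1 - α) * p₁ w := by
    intro w hw
    have h0 : 0 < p₀ w := by rw [hΩ0] at hw; exact hw
    have h1 : 0 ≤ p₁ w := hpos1 w
    positivity
  have key := hasDerivAt_integral_of_dominated_loc_of_deriv_le (μ := volume.restrict Ω)
    (F := F) (F' := F') (x₀ := α) (bound := bound) (Metric.ball_mem_nhds α hε0)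
    (by
      filter_upwards with x
      exact ((hm0.mul hm1).div
        ((measurable_const.mul hm0).add (measurable_const.mul hm1))).aestronglyMeasurable)
    ((hUint α ⟨hα0.le, hα1.le⟩))
    (((hm0.mul hm1).mul (hm1.sub hm0)).div
      (((measurable_const.mul hm0).add (measurable_const.mul hm1)).pow
        measurable_const)).aestronglyMeasurable
    (by
      filter_upwards [ae_restrict_mem hΩmeas] with w hw x hx
      have hD := hDpos w hw
      have hdx := hden w hw x hx
      have hDx : 0 < x * p₀ w + (1 - x) * p₁ w := by linarith
      have hN : (0:ℝ) ≤ p₀ w * p₁ w * |p₁ w - p₀ w| :=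
        mul_nonneg (mul_nonneg (hpos0 w) (hpos1 w)) (abs_nonneg _)
      simp only [hF', hb, Real.norm_eq_abs, abs_div, abs_mul,
        abs_of_nonneg (hpos0 w), abs_of_nonneg (hpos1 w), abs_pow,
        abs_of_pos hDx, abs_of_pos hD]
      rw [div_le_iff₀ (by positivity), mul_comm (4:ℝ), mul_assoc, div_mul_eq_mul_div,
        div_mul_eq_mul_div, le_div_iff₀ (by positivity)]
      nlinarith [mul_self_le_mul_self (by positivity :
        (0:ℝ) ≤ (α * p₀ w + (1 - α) * p₁ w) / 2) hdx, hN]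
    )
    (hDint.norm.const_mul 4)
    (by
      filter_upwards [ae_restrict_mem hΩmeas] with w hw x hx
      have hD := hDpos w hw
      have hdx := hden w hw x hx
      have hDx : x * p₀ w + (1 - x) * p₁ w ≠ 0 := by
        have : 0 < x * p₀ w + (1 - x) * p₁ w := by linarith
        exact ne_of_gt this
      have hd : HasDerivAt (fun a : ℝ => a * p₀ w + (1 - a) * p₁ w)
          (p₀ w - p₁ w) x := by
        have := ((hasDerivAt_id x).mul_const (p₀ w)).add
          (((hasDerivAt_const x (1:ℝ)).sub (hasDerivAt_id x)).mul_const (p₁ w))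
        exact this.congr_deriv (by ring)
      have := (hasDerivAt_const x (p₀ w * p₁ w)).div hd hDx
      refine this.congr_deriv ?_
      simp only [hF']
      field_simp
      ring)
  exact key.2
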